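/- In microCCS, every process admits a prime decomposition which is unique up to bisimilarity: if P₁‖…‖Pₙ ∼ Q₁‖…‖Qₘ where all Pᵢ and Qⱼ are prime, then n = m and there is a permutation f of {1,…,n} with Pᵢ ∼ Q_{f(i)} for all i. -/

import Mathlib

/-- CCS visible actions: a name `a` or a coname `ā`. -/
inductive Act where
  | inp : ℕ → Act
  | out : ℕ → Act
deriving DecidableEq

/-- The coaction. -/
def Act.co : Act → Act
  | .inp a => .out a
  | .out a => .inp a

/-- MicroCCS processes: nil, prefix, parallel composition. -/
inductive Proc where
  | nil : Proc
  | pre : Act → Proc → Proc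
  | par : Proc → Proc → Proc
deriving DecidableEq

/-- Transition labels: a visible action or τ. -/
inductive Lab where
  | act : Act → Lab
  | tau : Lab
deriving DecidableEq

/-- The standard CCS labelled transition system on microCCS. -/
inductive Step : Proc → Lab → Proc → Prop where
  | pre (η : Act) (P : Proc) : Step (.pre η P) (.act η) P
  | syn {P P' Q Q' : Proc} {η : Act} :
      Step P (.act η) P' → Step Q (.act η.co) Q' →
      Step (.par P Q) .tau (.par P' Q')
  | parL {P P' : Proc} {μ : Lab} (Q : Proc) :
      Step P μ P' → Step (.par P Q) μ (.par P' Q)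
  | parR {Q Q' : Proc} {μ : Lab} (P : Proc) :
      Step Q μ Q' → Step (.par P Q) μ (.par P Q')

/-- A (symmetric) bisimulation. -/
def IsBisim (R : Proc → Proc → Prop) : Prop :=
  (∀ P Q, R P Q → R Q P) ∧
  ∀ P Q μ P', R P Q → Step P μ P' → ∃ Q', Step Q μ Q' ∧ R P' Q'

/-- Strong bisimilarity: the union of all bisimulations. -/
def Bisim (P Q : Proc) : Prop := ∃ R, IsBisim R ∧ R P Q

/-- The size of a process: its number of prefixes. -/
def Proc.size : Proc → ℕ
  | .nil => 0
  | .pre _ P => 1 + P.size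
  | .par P Q => P.size + Q.size

/-- Structural congruence: abelian monoid laws for parallel composition. -/
inductive SC : Proc → Proc → Prop where
  | refl (P) : SC P P
  | symm : SC P Q → SC Q P
  | trans : SC P Q → SC Q R → SC P R
  | comm (P Q) : SC (.par P Q) (.par Q P)
  | assoc (P Q R) : SC (.par P (.par Q R)) (.par (.par P Q) R)
  | unit (P) : SC (.par P .nil) P
  | pre (η) : SC P Q → SC (.pre η P) (.pre η Q)
  | par : SC P P' → SC Q Q' → SC (.par P Q) (.par P' Q')

/-- `pow P k` is the k-fold parallel composition of `P`. -/
def pow (P : Proc) : ℕ → Proc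
  | 0 => .nil
  | n+1 => .par P (pow P n)

/-- One step of rewriting with the distribution law
    `η.(P ‖ (η.P)^k) ⇝ (η.P)^{k+1}` (k ≥ 1), modulo structural
    congruence, in any context. -/
inductive RW : Proc → Proc → Prop where
  | head {η : Act} {P : Proc} {k : ℕ} (hk : 1 ≤ k) :
      RW (.pre η (.par P (pow (.pre η P) k))) (pow (.pre η P) (k+1))
  | pre (η) : RW P P' → RW (.pre η P) (.pre η P')
  | parL (Q) : RW P P' → RW (.par P Q) (.par P' Q)
  | parR (P) : RW Q Q' → RW (.par P Q) (.par P Q')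
  | congr : SC P P₁ → RW P₁ P₂ → SC P₂ P' → RW P P'

/-- Reflexive-transitive closure of the distribution rewriting. -/
def Rws : Proc → Proc → Prop := Relation.ReflTransGen RW

/-- Normal forms for the distribution rewriting. -/
def NF (P : Proc) : Prop := ¬ ∃ P', RW P P'

/-- Prime processes. -/
def IsPrime (P : Proc) : Prop :=
  ¬ Bisim P .nil ∧ ∀ Q R, Bisim P (.par Q R) → Bisim Q .nil ∨ Bisim R .nil

/-- Parallel composition of a list of processes. -/
def prodList : List Proc → Proc := List.foldr .par .nil

-- ===== infrastructure =====

@[simp] lemma Act.co_co (η : Act) : η.co.co = η := by cases η <;> rfl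

lemma isBisim_bisim : IsBisim Bisim := by
  constructor
  · rintro P Q ⟨R, hR, h⟩; exact ⟨R, hR, hR.1 _ _ h⟩
  · rintro P Q μ P' ⟨R, hR, h⟩ hs
    obtain ⟨Q', hQ', h'⟩ := hR.2 _ _ _ _ h hs
    exact ⟨Q', hQ', R, hR, h'⟩

lemma Bisim.refl (P : Proc) : Bisim P P :=
  ⟨Eq, ⟨fun _ _ h => h.symm, fun P Q μ P' h hs => ⟨P', h ▸ hs, rfl⟩⟩, rfl⟩

lemma Bisim.symm {P Q : Proc} (h : Bisim P Q) : Bisim Q P :=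
  isBisim_bisim.1 _ _ h

lemma Bisim.step {P Q μ P'} (h : Bisim P Q) (hs : Step P μ P') :
    ∃ Q', Step Q μ Q' ∧ Bisim P' Q' := isBisim_bisim.2 _ _ _ _ h hs

lemma Bisim.trans {P Q R : Proc} (h1 : Bisim P Q) (h2 : Bisim Q R) : Bisim P R := by
  refine ⟨fun X Z => ∃ Y, Bisim X Y ∧ Bisim Y Z, ⟨?_, ?_⟩, Q, h1, h2⟩
  · rintro X Z ⟨Y, a, b⟩; exact ⟨Y, b.symm, a.symm⟩
  · rintro X Z μ X' ⟨Y, a, b⟩ hs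
    obtain ⟨Y', hY', a'⟩ := a.step hs
    obtain ⟨Z', hZ', b'⟩ := b.step hY'
    exact ⟨Z', hZ', Y', a', b'⟩

/-- Closure lemma: to prove bisimilarity it suffices to match one step into `Bisim`. -/
lemma bisim_of_match {P Q : Proc}
    (h1 : ∀ μ P', Step P μ P' → ∃ Q', Step Q μ Q' ∧ Bisim P' Q')
    (h2 : ∀ μ Q', Step Q μ Q' → ∃ P', Step P μ P' ∧ Bisim Q' P') :
    Bisim P Q := by
  refine ⟨fun X Y => (X = P ∧ Y = Q) ∨ (X = Q ∧ Y = P) ∨ Bisim X Y, ⟨?_, ?_⟩, Or.inl ⟨rfl, rfl⟩⟩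
  · rintro X Y (⟨rfl, rfl⟩ | ⟨rfl, rfl⟩ | h)
    · exact Or.inr (Or.inl ⟨rfl, rfl⟩)
    · exact Or.inl ⟨rfl, rfl⟩
    · exact Or.inr (Or.inr h.symm)
  · rintro X Y μ X' (⟨rfl, rfl⟩ | ⟨rfl, rfl⟩ | h) hs
    · obtain ⟨Q', hQ', hb⟩ := h1 _ _ hs; exact ⟨Q', hQ', Or.inr (Or.inr hb)⟩
    · obtain ⟨P', hP', hb⟩ := h2 _ _ hs; exact ⟨P', hP', Or.inr (Or.inr hb)⟩
    · obtain ⟨Y', hY', hb⟩ := h.step hs; exact ⟨Y', hY', Or.inr (Or.inr hb)⟩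

lemma bisim_par_congr {A A' B B' : Proc} (ha : Bisim A A') (hb : Bisim B B') :
    Bisim (.par A B) (.par A' B') := by
  refine ⟨fun X Y => ∃ A B A' B', X = .par A B ∧ Y = .par A' B' ∧ Bisim A A' ∧ Bisim B B',
    ⟨?_, ?_⟩, A, B, A', B', rfl, rfl, ha, hb⟩
  · rintro X Y ⟨A, B, A', B', rfl, rfl, h1, h2⟩
    exact ⟨A', B', A, B, rfl, rfl, h1.symm, h2.symm⟩
  · rintro X Y μ X' ⟨A, B, A', B', rfl, rfl, h1, h2⟩ hs
    cases hs with
    | syn hA hB =>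
      obtain ⟨A₁, sA, bA⟩ := h1.step hA
      obtain ⟨B₁, sB, bB⟩ := h2.step hB
      exact ⟨_, .syn sA sB, _, _, _, _, rfl, rfl, bA, bB⟩
    | parL Q hA =>
      obtain ⟨A₁, sA, bA⟩ := h1.step hA
      exact ⟨_, .parL _ sA, _, _, _, _, rfl, rfl, bA, h2⟩
    | parR Q hB =>
      obtain ⟨B₁, sB, bB⟩ := h2.step hB
      exact ⟨_, .parR _ sB, _, _, _, _, rfl, rfl, h1, bB⟩

lemma bisim_pre_congr (η : Act) {A B : Proc} (h : Bisim A B) :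
    Bisim (.pre η A) (.pre η B) := by
  apply bisim_of_match
  · rintro μ P' hs; cases hs; exact ⟨B, .pre η B, h⟩
  · rintro μ Q' hs; cases hs; exact ⟨A, .pre η A, h.symm⟩

lemma bisim_par_comm (A B : Proc) : Bisim (.par A B) (.par B A) := by
  refine ⟨fun X Y => ∃ A B, X = .par A B ∧ Y = .par B A, ⟨?_, ?_⟩, A, B, rfl, rfl⟩
  · rintro X Y ⟨A, B, rfl, rfl⟩; exact ⟨B, A, rfl, rfl⟩
  · rintro X Y μ X' ⟨A, B, rfl, rfl⟩ hs
    cases hs with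
    | @syn _ _ _ _ η hA hB =>
      refine ⟨_, Step.syn hB ?_, _, _, rfl, rfl⟩
      rw [Act.co_co]; exact hA
    | parL Q hA => exact ⟨_, .parR _ hA, _, _, rfl, rfl⟩
    | parR Q hB => exact ⟨_, .parL _ hB, _, _, rfl, rfl⟩

lemma bisim_par_nil (A : Proc) : Bisim (.par A .nil) A := by
  refine ⟨fun X Y => X = .par Y .nil ∨ Y = .par X .nil, ⟨?_, ?_⟩, Or.inl rfl⟩
  · rintro X Y (h | h) <;> [exact Or.inr h; exact Or.inl h]
  · rintro X Y μ X' (rfl | rfl) hs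
    · cases hs with
      | syn hA hB => cases hB
      | parL Q hA => exact ⟨_, hA, Or.inl rfl⟩
      | parR Q hB => cases hB
    · exact ⟨_, .parL _ hs, Or.inr rfl⟩

lemma bisim_par_assoc (A B C : Proc) : Bisim (.par A (.par B C)) (.par (.par A B) C) := by
  refine ⟨fun X Y => ∃ A B C, (X = .par A (.par B C) ∧ Y = .par (.par A B) C) ∨
      (Y = .par A (.par B C) ∧ X = .par (.par A B) C), ⟨?_, ?_⟩,
      A, B, C, Or.inl ⟨rfl, rfl⟩⟩
  · rintro X Y ⟨A, B, C, ⟨rfl, rfl⟩ | ⟨rfl, rfl⟩⟩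
    · exact ⟨A, B, C, Or.inr ⟨rfl, rfl⟩⟩
    · exact ⟨A, B, C, Or.inl ⟨rfl, rfl⟩⟩
  · rintro X Y μ X' ⟨A, B, C, ⟨rfl, rfl⟩ | ⟨rfl, rfl⟩⟩ hs
    · -- X = A ‖ (B ‖ C) steps, match by (A ‖ B) ‖ C
      cases hs with
      | syn hA hBC =>
        cases hBC with
        | parL _ hB => exact ⟨_, .parL _ (.syn hA hB), _, _, _, Or.inl ⟨rfl, rfl⟩⟩
        | parR _ hC => exact ⟨_, .syn (.parL _ hA) hC, _, _, _, Or.inl ⟨rfl, rfl⟩⟩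
      | parL _ hA => exact ⟨_, .parL _ (.parL _ hA), _, _, _, Or.inl ⟨rfl, rfl⟩⟩
      | parR _ hBC =>
        cases hBC with
        | syn hB hC => exact ⟨_, .syn (.parR _ hB) hC, _, _, _, Or.inl ⟨rfl, rfl⟩⟩
        | parL _ hB => exact ⟨_, .parL _ (.parR _ hB), _, _, _, Or.inl ⟨rfl, rfl⟩⟩
        | parR _ hC => exact ⟨_, .parR _ hC, _, _, _, Or.inl ⟨rfl, rfl⟩⟩
    · -- X = (A ‖ B) ‖ C steps, match by A ‖ (B ‖ C)
      cases hs with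
      | syn hAB hC =>
        cases hAB with
        | parL _ hA => exact ⟨_, .syn hA (.parR _ hC), _, _, _, Or.inr ⟨rfl, rfl⟩⟩
        | parR _ hB => exact ⟨_, .parR _ (.syn hB hC), _, _, _, Or.inr ⟨rfl, rfl⟩⟩
      | parL _ hAB =>
        cases hAB with
        | syn hA hB => exact ⟨_, .syn hA (.parL _ hB), _, _, _, Or.inr ⟨rfl, rfl⟩⟩
        | parL _ hA => exact ⟨_, .parL _ hA, _, _, _, Or.inr ⟨rfl, rfl⟩⟩
        | parR _ hB => exact ⟨_, .parR _ (.parL _ hB), _, _, _, Or.inr ⟨rfl, rfl⟩⟩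
      | parR _ hC => exact ⟨_, .parR _ (.parR _ hC), _, _, _, Or.inr ⟨rfl, rfl⟩⟩

-- ===== size =====

def Lab.w : Lab → ℕ
  | .act _ => 1
  | .tau => 2

lemma step_size {P μ P'} (h : Step P μ P') : P.size = P'.size + μ.w := by
  induction h with
  | pre η P => simp [Proc.size, Lab.w, Nat.add_comm]
  | syn hA hB ihA ihB => simp [Proc.size, Lab.w] at *; omega
  | parL Q hA ih => simp [Proc.size, Lab.w] at *; omega
  | parR P hB ih => simp [Proc.size, Lab.w] at *; omega

lemma no_step_of_size_zero {P μ P'} (h : Step P μ P') : 0 < P.size := by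
  have := step_size h; cases μ <;> simp [Lab.w] at this <;> omega

lemma exists_visible_step {P : Proc} (h : 0 < P.size) :
    ∃ η P', Step P (.act η) P' := by
  induction P with
  | nil => simp [Proc.size] at h
  | pre η P _ => exact ⟨η, P, .pre η P⟩
  | par A B ihA ihB =>
    simp [Proc.size] at h
    rcases Nat.eq_zero_or_pos A.size with hA | hA
    case inr => obtain ⟨η, A', hs⟩ := ihA hA; exact ⟨η, _, .parL _ hs⟩
    case inl => obtain ⟨η, B', hs⟩ := ihB (by omega); exact ⟨η, _, .parR _ hs⟩

lemma bisim_size {P Q : Proc} (h : Bisim P Q) : P.size = Q.size := by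
  suffices H : ∀ n P Q, Bisim P Q → Q.size = n → P.size = n by
    exact H _ P Q h rfl
  intro n
  induction n with
  | zero =>
    intro P Q h hQ
    by_contra hP
    obtain ⟨η, P', hs⟩ := exists_visible_step (Nat.pos_of_ne_zero hP)
    obtain ⟨Q', hQ', _⟩ := h.step hs
    have := no_step_of_size_zero hQ'; omega
  | succ n ih =>
    intro P Q h hQ
    obtain ⟨η, Q', hs⟩ := exists_visible_step (show 0 < Q.size by omega)
    obtain ⟨P', hP', hb⟩ := h.symm.step hs
    have h1 := step_size hs
    have h2 := step_size hP'
    have := ih P' Q' hb.symm (by simp [Lab.w] at h1; omega)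
    simp [Lab.w] at h2; omega

lemma bisim_nil_of_size_zero {P Q : Proc} (hP : P.size = 0) (hQ : Q.size = 0) :
    Bisim P Q := by
  refine ⟨fun X Y => X.size = 0 ∧ Y.size = 0, ⟨?_, ?_⟩, hP, hQ⟩
  · rintro X Y ⟨a, b⟩; exact ⟨b, a⟩
  · rintro X Y μ X' ⟨a, b⟩ hs
    have := no_step_of_size_zero hs; omega

lemma bisim_nil_iff {P : Proc} : Bisim P .nil ↔ P.size = 0 := by
  constructor
  · intro h; simpa [Proc.size] using bisim_size h
  · intro h; exact bisim_nil_of_size_zero h rfl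

-- ===== the quotient commutative monoid =====

instance procSetoid : Setoid Proc := ⟨Bisim, ⟨Bisim.refl, Bisim.symm, Bisim.trans⟩⟩

abbrev M := Quotient procSetoid

instance : One M := ⟨⟦.nil⟧⟩

instance : Mul M :=
  ⟨Quotient.map₂ .par (fun _ _ h1 _ _ h2 => bisim_par_congr h1 h2)⟩

@[simp] lemma mk_mul (P Q : Proc) : (⟦P⟧ : M) * ⟦Q⟧ = ⟦.par P Q⟧ := rfl

lemma one_def : (1 : M) = ⟦.nil⟧ := rfl

lemma mk_eq_mk {P Q : Proc} : (⟦P⟧ : M) = ⟦Q⟧ ↔ Bisim P Q :=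
  ⟨Quotient.exact, fun h => Quotient.sound h⟩

instance : CommMonoid M where
  mul_assoc a b c := by
    induction a using Quotient.ind
    induction b using Quotient.ind
    induction c using Quotient.ind
    exact (mk_eq_mk.2 (bisim_par_assoc _ _ _)).symm
  one_mul a := by
    induction a using Quotient.ind
    exact mk_eq_mk.2 ((bisim_par_comm _ _).trans (bisim_par_nil _))
  mul_one a := by
    induction a using Quotient.ind
    exact mk_eq_mk.2 (bisim_par_nil _)
  mul_comm a b := by
    induction a using Quotient.ind
    induction b using Quotient.ind
    exact mk_eq_mk.2 (bisim_par_comm _ _)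

def mpre (η : Act) : M → M :=
  Quotient.map (.pre η) (fun _ _ h => bisim_pre_congr η h)

@[simp] lemma mk_mpre (η : Act) (P : Proc) : mpre η ⟦P⟧ = (⟦.pre η P⟧ : M) := rfl

def msize : M → ℕ := Quotient.lift Proc.size (fun _ _ h => bisim_size h)

@[simp] lemma mk_msize (P : Proc) : msize ⟦P⟧ = P.size := rfl

@[simp] lemma msize_mul (x y : M) : msize (x * y) = msize x + msize y := by
  induction x using Quotient.ind
  induction y using Quotient.ind
  rfl

@[simp] lemma msize_one : msize (1 : M) = 0 := rfl

lemma msize_eq_zero_iff {x : M} : msize x = 0 ↔ x = 1 := by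
  induction x using Quotient.ind with
  | _ P =>
    constructor
    · intro h; exact mk_eq_mk.2 (bisim_nil_iff.2 h)
    · intro h; have := mk_eq_mk.1 h; simpa [Proc.size] using bisim_size this

@[simp] lemma msize_mpre (η : Act) (x : M) : msize (mpre η x) = 1 + msize x := by
  induction x using Quotient.ind; rfl

-- transitions on M

def MStep (x : M) (μ : Lab) (y : M) : Prop :=
  ∃ P P', x = ⟦P⟧ ∧ y = ⟦P'⟧ ∧ Step P μ P'

lemma mstep_mk {P : Proc} {μ y} : MStep ⟦P⟧ μ y ↔ ∃ P', Step P μ P' ∧ y = ⟦P'⟧ := by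
  constructor
  · rintro ⟨R, R', hx, rfl, hs⟩
    have hb : Bisim P R := mk_eq_mk.1 hx
    obtain ⟨P', hP', hb'⟩ := hb.symm.step hs
    exact ⟨P', hP', mk_eq_mk.2 hb'⟩
  · rintro ⟨P', hs, rfl⟩; exact ⟨P, P', rfl, rfl, hs⟩

lemma mstep_mulL {x x' : M} (y : M) {μ} (h : MStep x μ x') : MStep (x * y) μ (x' * y) := by
  obtain ⟨P, P', rfl, rfl, hs⟩ := h
  induction y using Quotient.ind with
  | _ Q => exact ⟨.par P Q, .par P' Q, rfl, rfl, .parL _ hs⟩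

lemma mstep_ext {x y : M} (h : ∀ μ z, MStep x μ z ↔ MStep y μ z) : x = y := by
  induction x using Quotient.ind with
  | _ P =>
  induction y using Quotient.ind with
  | _ Q =>
    refine mk_eq_mk.2 (bisim_of_match ?_ ?_)
    · intro μ P' hs
      have : MStep ⟦Q⟧ μ ⟦P'⟧ := (h μ _).1 (mstep_mk.2 ⟨P', hs, rfl⟩)
      obtain ⟨Q', hQ', he⟩ := mstep_mk.1 this
      exact ⟨Q', hQ', (mk_eq_mk.1 he)⟩
    · intro μ Q' hs
      have : MStep ⟦P⟧ μ ⟦Q'⟧ := (h μ _).2 (mstep_mk.2 ⟨Q', hs, rfl⟩)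
      obtain ⟨P', hP', he⟩ := mstep_mk.1 this
      exact ⟨P', hP', (mk_eq_mk.1 he)⟩

lemma mstep_mpre_iff {η : Act} {x : M} {μ z} :
    MStep (mpre η x) μ z ↔ μ = .act η ∧ z = x := by
  induction x using Quotient.ind with
  | _ P =>
    rw [mk_mpre, mstep_mk]
    constructor
    · rintro ⟨P', hs, rfl⟩; cases hs; exact ⟨rfl, rfl⟩
    · rintro ⟨rfl, rfl⟩; exact ⟨P, .pre η P, rfl⟩

lemma mstep_mpre (η : Act) (x : M) : MStep (mpre η x) (.act η) x :=
  mstep_mpre_iff.2 ⟨rfl, rfl⟩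

lemma mstep_mul_visible {x y z : M} {θ : Act} (h : MStep (x * y) (.act θ) z) :
    (∃ x', MStep x (.act θ) x' ∧ z = x' * y) ∨ (∃ y', MStep y (.act θ) y' ∧ z = x * y') := by
  induction x using Quotient.ind with
  | _ P =>
  induction y using Quotient.ind with
  | _ Q =>
    rw [mk_mul, mstep_mk] at h
    obtain ⟨W, hs, rfl⟩ := h
    cases hs with
    | parL _ hA => exact Or.inl ⟨_, mstep_mk.2 ⟨_, hA, rfl⟩, rfl⟩
    | parR _ hB => exact Or.inr ⟨_, mstep_mk.2 ⟨_, hB, rfl⟩, rfl⟩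

lemma mstep_msize {x y : M} {θ : Act} (h : MStep x (.act θ) y) :
    msize x = msize y + 1 := by
  obtain ⟨P, P', rfl, rfl, hs⟩ := h
  simpa [Lab.w] using step_size hs

-- ===== primes in M =====

def MPrime (x : M) : Prop := x ≠ 1 ∧ ∀ u v : M, x = u * v → u = 1 ∨ v = 1

lemma isPrime_iff_mprime {P : Proc} : IsPrime P ↔ MPrime (⟦P⟧ : M) := by
  unfold IsPrime MPrime
  constructor
  · rintro ⟨h1, h2⟩
    refine ⟨fun h => h1 (mk_eq_mk.1 h), ?_⟩
    intro u v huv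
    induction u using Quotient.ind with
    | _ U =>
    induction v using Quotient.ind with
    | _ V =>
      rcases h2 U V (mk_eq_mk.1 huv) with h | h
      · exact Or.inl (mk_eq_mk.2 h)
      · exact Or.inr (mk_eq_mk.2 h)
  · rintro ⟨h1, h2⟩
    refine ⟨fun h => h1 (mk_eq_mk.2 h), ?_⟩
    intro U V h
    rcases h2 ⟦U⟧ ⟦V⟧ (mk_eq_mk.2 h) with h | h
    · exact Or.inl (mk_eq_mk.1 h)
    · exact Or.inr (mk_eq_mk.1 h)

lemma mprime_msize_pos {x : M} (h : MPrime x) : 0 < msize x := by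
  rcases Nat.eq_zero_or_pos (msize x) with h0 | h0
  · exact absurd (msize_eq_zero_iff.1 h0) h.1
  · exact h0

lemma mprime_shape {x : M} (h : MPrime x) : ∃ η A, x = mpre η A := by
  induction x using Quotient.ind with
  | _ P =>
    induction P with
    | nil => exact absurd rfl h.1
    | pre η A _ => exact ⟨η, ⟦A⟧, rfl⟩
    | par A B ihA ihB =>
      have : (⟦A.par B⟧ : M) = ⟦A⟧ * ⟦B⟧ := rfl
      rcases h.2 _ _ this with h1 | h1
      · have : (⟦A.par B⟧ : M) = ⟦B⟧ := by rw [this, h1, one_mul]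
        rw [this] at h ⊢
        exact ihB h
      · have : (⟦A.par B⟧ : M) = ⟦A⟧ := by rw [this, h1, mul_one]
        rw [this] at h ⊢
        exact ihA h

lemma mpre_inj {η θ : Act} {A B : M} (h : mpre η A = mpre θ B) : η = θ ∧ A = B := by
  have h1 : MStep (mpre θ B) (.act η) A := h ▸ mstep_mpre η A
  rw [mstep_mpre_iff] at h1
  obtain ⟨h2, rfl⟩ := h1
  cases h2; exact ⟨rfl, rfl⟩

-- ===== multiset products =====

noncomputable instance : DecidableEq M := Classical.decEq M

lemma msize_prod (S : Multiset M) : msize S.prod = (S.map msize).sum := by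
  induction S using Multiset.induction_on with
  | empty => simp
  | cons a s ih => simp [ih]

lemma msize_le_of_mem_decomp {S : Multiset M} {p : M} (hp : p ∈ S) :
    msize p ≤ msize S.prod := by
  rw [msize_prod]
  exact Multiset.le_sum_of_mem (Multiset.mem_map_of_mem msize hp)

lemma prod_ne_one_of_mem_prime {S : Multiset M} {p : M} (hmem : p ∈ S)
    (hpr : MPrime p) : S.prod ≠ 1 := by
  intro h
  have h1 : msize S.prod = 0 := by rw [h]; simp
  have := msize_le_of_mem_decomp hmem
  have := mprime_msize_pos hpr
  omega

lemma mstep_prod_of_mem {S : Multiset M} {p x : M} {μ} (hmem : p ∈ S) (h : MStep p μ x) :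
    MStep S.prod μ (x * (S.erase p).prod) := by
  have hS : S.prod = p * (S.erase p).prod := by
    rw [← Multiset.prod_cons, Multiset.cons_erase hmem]
  rw [hS]
  exact mstep_mulL _ h

lemma mstep_prod_visible {S : Multiset M} {θ : Act} {z : M}
    (h : MStep S.prod (.act θ) z) :
    ∃ r ∈ S, ∃ D, MStep r (.act θ) D ∧ z = D * (S.erase r).prod := by
  induction S using Multiset.induction_on generalizing z with
  | empty =>
    exfalso
    obtain ⟨P, P', hP, _, hs⟩ := h
    have h0 : (Multiset.prod 0 : M) = 1 := by simp
    have : P.size = 0 := by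
      have := congrArg msize (hP.symm.trans h0); simpa using this
    have := no_step_of_size_zero hs
    omega
  | cons a s ih =>
    rw [Multiset.prod_cons] at h
    rcases mstep_mul_visible h with ⟨x', hx', rfl⟩ | ⟨y', hy', rfl⟩
    · exact ⟨a, Multiset.mem_cons_self a s, x', hx', by rw [Multiset.erase_cons_head]⟩
    · obtain ⟨r, hr, D, hD, rfl⟩ := ih hy'
      refine ⟨r, Multiset.mem_cons_of_mem hr, D, hD, ?_⟩
      rw [Multiset.erase_cons_tail_of_mem hr, Multiset.prod_cons]
      rw [mul_left_comm]

-- ===== existence of prime decompositions =====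

lemma mexists_decomp : ∀ x : M, ∃ S : Multiset M, (∀ p ∈ S, MPrime p) ∧ S.prod = x := by
  suffices H : ∀ n (x : M), msize x = n → ∃ S : Multiset M, (∀ p ∈ S, MPrime p) ∧ S.prod = x by
    intro x; exact H _ x rfl
  intro n
  induction n using Nat.strong_induction_on with
  | _ n ih =>
    intro x hx
    by_cases h1 : x = 1
    · exact ⟨0, by simp, by simp [h1]⟩
    by_cases h2 : MPrime x
    · exact ⟨{x}, by simpa using h2, by simp⟩
    · unfold MPrime at h2
      push_neg at h2
      obtain ⟨u, v, huv, hu, hv⟩ := h2 h1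
      have hsz : msize u + msize v = n := by rw [← hx, huv]; simp
      have hu1 : 0 < msize u := Nat.pos_of_ne_zero (fun h => hu (msize_eq_zero_iff.1 h))
      have hv1 : 0 < msize v := Nat.pos_of_ne_zero (fun h => hv (msize_eq_zero_iff.1 h))
      obtain ⟨Su, hSu, hSup⟩ := ih (msize u) (by omega) u rfl
      obtain ⟨Sv, hSv, hSvp⟩ := ih (msize v) (by omega) v rfl
      refine ⟨Su + Sv, ?_, by rw [Multiset.prod_add, hSup, hSvp, huv]⟩
      intro p hp
      rcases Multiset.mem_add.1 hp with h | h
      · exact hSu p h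
      · exact hSv p h

lemma mem_decomp_msize_le {S : Multiset M} {x p : M} (hS : S.prod = x) (hp : p ∈ S) :
    msize p ≤ msize x := hS ▸ msize_le_of_mem_decomp hp

-- ===== uniqueness of prime decompositions =====

lemma exists_max_msize {S : Multiset M} (h : S ≠ 0) :
    ∃ p ∈ S, ∀ q ∈ S, msize q ≤ msize p := by
  induction S using Multiset.induction_on with
  | empty => exact absurd rfl h
  | cons a s ih =>
    by_cases hs : s = 0
    · subst hs
      exact ⟨a, Multiset.mem_cons_self a 0, by intro q hq; simp at hq; simp [hq]⟩
    · obtain ⟨p, hp, hmax⟩ := ih hs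
      by_cases hc : msize a ≤ msize p
      · refine ⟨p, Multiset.mem_cons_of_mem hp, ?_⟩
        intro q hq
        rcases Multiset.mem_cons.1 hq with rfl | hq
        · exact hc
        · exact hmax q hq
      · refine ⟨a, Multiset.mem_cons_self a s, ?_⟩
        intro q hq
        rcases Multiset.mem_cons.1 hq with rfl | hq
        · exact le_rfl
        · exact le_trans (hmax q hq) (by omega)

lemma muniq_aux (n : ℕ)
    (ih : ∀ m, m < n → ∀ S T : Multiset M, (∀ p ∈ S, MPrime p) → (∀ q ∈ T, MPrime q) →
      S.prod = T.prod → msize S.prod = m → S = T)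
    (S T : Multiset M) (hS : ∀ p ∈ S, MPrime p) (hT : ∀ q ∈ T, MPrime q)
    (hST : S.prod = T.prod) (hn : msize S.prod = n)
    (p : M) (hpS : p ∈ S) (hmax : ∀ q ∈ S + T, msize q ≤ msize p) : S = T := by
  have hmaxS : ∀ q ∈ S, msize q ≤ msize p := fun q hq => hmax q (Multiset.mem_add.2 (Or.inl hq))
  have hmaxT : ∀ q ∈ T, msize q ≤ msize p := fun q hq => hmax q (Multiset.mem_add.2 (Or.inr hq))
  have hpprime := hS p hpS
  obtain ⟨η, A, hpA⟩ := mprime_shape hpprime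
  have hpsize : msize p = 1 + msize A := by rw [hpA, msize_mpre]
  have hple : msize p ≤ n := hn ▸ msize_le_of_mem_decomp hpS
  -- size bookkeeping for erase
  have hSsplit : msize S.prod = msize p + msize (S.erase p).prod := by
    conv_lhs => rw [← Multiset.cons_erase hpS]
    rw [Multiset.prod_cons, msize_mul]
  by_cases hSE : S.erase p = 0
  · -- S = {p}
    have hSsing : S = {p} := by
      have := Multiset.cons_erase hpS
      rw [hSE] at this
      exact this.symm
    have hprodp : S.prod = p := by rw [hSsing]; simp
    have hT0 : T ≠ 0 := by
      intro h0
      rw [h0] at hST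
      simp at hST
      exact hpprime.1 (by rw [← hprodp, hST])
    obtain ⟨q, hq⟩ := Multiset.exists_mem_of_ne_zero hT0
    obtain ⟨T', rfl⟩ := Multiset.exists_cons_of_mem hq
    have : p = q * T'.prod := by rw [← hprodp, hST, Multiset.prod_cons]
    rcases hpprime.2 _ _ this with h1 | h1
    · exact absurd h1 (hT q (Multiset.mem_cons_self _ _)).1
    · have hT' : T' = 0 := by
        by_contra hne
        obtain ⟨q', hq'⟩ := Multiset.exists_mem_of_ne_zero hne
        exact prod_ne_one_of_mem_prime hq' (hT q' (Multiset.mem_cons_of_mem hq')) h1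
      subst hT'
      rw [hSsing]
      congr 1
      rw [this, h1, mul_one]
  · -- kill shot : p ∈ T
    obtain ⟨t, ht⟩ := Multiset.exists_mem_of_ne_zero hSE
    have htS : t ∈ S := Multiset.mem_of_mem_erase ht
    obtain ⟨θ, C, htC⟩ := mprime_shape (hS t htS)
    have hstep1 : MStep T.prod (.act θ) (C * (S.erase t).prod) := by
      rw [← hST]
      exact mstep_prod_of_mem htS (htC ▸ mstep_mpre θ C)
    obtain ⟨r, hrT, D, hrD, heq⟩ := mstep_prod_visible hstep1
    obtain ⟨SC, hSC, hSCp⟩ := mexists_decomp C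
    obtain ⟨SD, hSD, hSDp⟩ := mexists_decomp D
    have htsize : msize t = 1 + msize C := by rw [htC, msize_mpre]
    have hSsplit' : msize S.prod = msize t + msize (S.erase t).prod := by
      conv_lhs => rw [← Multiset.cons_erase htS]
      rw [Multiset.prod_cons, msize_mul]
    have hprodeq : (SC + S.erase t).prod = (SD + T.erase r).prod := by
      rw [Multiset.prod_add, Multiset.prod_add, hSCp, hSDp, heq]
    have hm1 : msize (SC + S.erase t).prod < n := by
      rw [Multiset.prod_add, msize_mul, hSCp]
      omega
    have hpr1 : ∀ x ∈ SC + S.erase t, MPrime x := by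
      intro x hx
      rcases Multiset.mem_add.1 hx with h | h
      · exact hSC x h
      · exact hS x (Multiset.mem_of_mem_erase h)
    have hpr2 : ∀ x ∈ SD + T.erase r, MPrime x := by
      intro x hx
      rcases Multiset.mem_add.1 hx with h | h
      · exact hSD x h
      · exact hT x (Multiset.mem_of_mem_erase h)
    have hmulteq := ih _ hm1 _ _ hpr1 hpr2 hprodeq rfl
    have hrsize : msize r = msize D + 1 := mstep_msize hrD
    have hcount : Multiset.count p (SC + S.erase t) = Multiset.count p (SD + T.erase r) := by
      rw [hmulteq]
    have hcSC : Multiset.count p SC = 0 := by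
      rw [Multiset.count_eq_zero]
      intro hmem
      have h1 : msize p ≤ msize C := hSCp ▸ msize_le_of_mem_decomp hmem
      have h2 : msize t ≤ msize p := hmaxS t htS
      omega
    have hcSD : Multiset.count p SD = 0 := by
      rw [Multiset.count_eq_zero]
      intro hmem
      have h1 : msize p ≤ msize D := hSDp ▸ msize_le_of_mem_decomp hmem
      have h2 : msize r ≤ msize p := hmaxT r hrT
      omega
    have hcount2 : Multiset.count p (S.erase t) = Multiset.count p (T.erase r) := by
      rw [Multiset.count_add, Multiset.count_add, hcSC, hcSD] at hcount
      simpa using hcount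
    have hcErase : 1 ≤ Multiset.count p (S.erase t) := by
      by_cases hpt : p = t
      · subst hpt
        have : p ∈ S.erase p := ht
        exact Multiset.one_le_count_iff_mem.2 this
      · rw [Multiset.count_erase_of_ne hpt]
        exact Multiset.one_le_count_iff_mem.2 hpS
    have hpT : p ∈ T := by
      have h1 : 1 ≤ Multiset.count p (T.erase r) := hcount2 ▸ hcErase
      have h2 := Multiset.count_le_of_le p (Multiset.erase_le r T)
      exact Multiset.one_le_count_iff_mem.1 (by omega)
    -- eq1 : fire p in S
    have hstep2 : MStep T.prod (.act η) (A * (S.erase p).prod) := by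
      rw [← hST]
      exact mstep_prod_of_mem hpS (hpA ▸ mstep_mpre η A)
    obtain ⟨r1, hr1T, D1, hr1D, heq1⟩ := mstep_prod_visible hstep2
    obtain ⟨SA, hSA, hSAp⟩ := mexists_decomp A
    obtain ⟨SD1, hSD1, hSD1p⟩ := mexists_decomp D1
    have hprodeq1 : (SA + S.erase p).prod = (SD1 + T.erase r1).prod := by
      rw [Multiset.prod_add, Multiset.prod_add, hSAp, hSD1p, heq1]
    have hm2 : msize (SA + S.erase p).prod < n := by
      rw [Multiset.prod_add, msize_mul, hSAp]
      omega
    have hpr3 : ∀ x ∈ SA + S.erase p, MPrime x := by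
      intro x hx
      rcases Multiset.mem_add.1 hx with h | h
      · exact hSA x h
      · exact hS x (Multiset.mem_of_mem_erase h)
    have hpr4 : ∀ x ∈ SD1 + T.erase r1, MPrime x := by
      intro x hx
      rcases Multiset.mem_add.1 hx with h | h
      · exact hSD1 x h
      · exact hT x (Multiset.mem_of_mem_erase h)
    have hmulteq1 := ih _ hm2 _ _ hpr3 hpr4 hprodeq1 rfl
    have hr1size : msize r1 = msize D1 + 1 := mstep_msize hr1D
    have hcSA : Multiset.count p SA = 0 := by
      rw [Multiset.count_eq_zero]
      intro hmem
      have h1 : msize p ≤ msize A := hSAp ▸ msize_le_of_mem_decomp hmem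
      omega
    have hcSD1 : Multiset.count p SD1 = 0 := by
      rw [Multiset.count_eq_zero]
      intro hmem
      have h1 : msize p ≤ msize D1 := hSD1p ▸ msize_le_of_mem_decomp hmem
      have h2 : msize r1 ≤ msize p := hmaxT r1 hr1T
      omega
    have hcount3 : Multiset.count p (S.erase p) = Multiset.count p (T.erase r1) := by
      have := congrArg (Multiset.count p) hmulteq1
      rw [Multiset.count_add, Multiset.count_add, hcSA, hcSD1] at this
      simpa using this
    by_cases hr1p : r1 = p
    · -- the matching component is p itself: conclude S = T
      have hD1A : D1 = A := by
        rw [hr1p, hpA, mstep_mpre_iff] at hr1D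
        exact hr1D.2
      have hSASD1 : SA = SD1 := by
        refine ih (msize A) (by omega) _ _ hSA hSD1 ?_ (by rw [hSAp])
        rw [hSAp, hSD1p, hD1A]
      rw [hSASD1] at hmulteq1
      have herase : S.erase p = T.erase r1 := by
        rw [hr1p] at hmulteq1 ⊢
        exact add_left_cancel hmulteq1
      calc S = p ::ₘ S.erase p := (Multiset.cons_erase hpS).symm
        _ = r1 ::ₘ T.erase r1 := by rw [herase, hr1p]
        _ = T := Multiset.cons_erase hr1T
    · -- impossible by counting
      exfalso
      have hcount3' : Multiset.count p S - 1 = Multiset.count p T := by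
        rw [Multiset.count_erase_self, Multiset.count_erase_of_ne (show p ≠ r1 from fun h => hr1p h.symm)] at hcount3
        exact hcount3
      -- eq2 : fire p in T
      have hstep3 : MStep S.prod (.act η) (A * (T.erase p).prod) := by
        rw [hST]
        exact mstep_prod_of_mem hpT (hpA ▸ mstep_mpre η A)
      obtain ⟨r2, hr2S, D2, hr2D, heq2⟩ := mstep_prod_visible hstep3
      obtain ⟨SD2, hSD2, hSD2p⟩ := mexists_decomp D2
      have hprodeq2 : (SA + T.erase p).prod = (SD2 + S.erase r2).prod := by
        rw [Multiset.prod_add, Multiset.prod_add, hSAp, hSD2p, heq2]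
      have hTsplit : msize T.prod = msize p + msize (T.erase p).prod := by
        conv_lhs => rw [← Multiset.cons_erase hpT]
        rw [Multiset.prod_cons, msize_mul]
      have hm3 : msize (SA + T.erase p).prod < n := by
        rw [Multiset.prod_add, msize_mul, hSAp]
        rw [hST] at hn
        omega
      have hpr5 : ∀ x ∈ SA + T.erase p, MPrime x := by
        intro x hx
        rcases Multiset.mem_add.1 hx with h | h
        · exact hSA x h
        · exact hT x (Multiset.mem_of_mem_erase h)
      have hpr6 : ∀ x ∈ SD2 + S.erase r2, MPrime x := by
        intro x hx
        rcases Multiset.mem_add.1 hx with h | h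
        · exact hSD2 x h
        · exact hS x (Multiset.mem_of_mem_erase h)
      have hmulteq2 := ih _ hm3 _ _ hpr5 hpr6 hprodeq2 rfl
      have hr2size : msize r2 = msize D2 + 1 := mstep_msize hr2D
      have hcSD2 : Multiset.count p SD2 = 0 := by
        rw [Multiset.count_eq_zero]
        intro hmem
        have h1 : msize p ≤ msize D2 := hSD2p ▸ msize_le_of_mem_decomp hmem
        have h2 : msize r2 ≤ msize p := hmaxS r2 hr2S
        omega
      have hcount4 : Multiset.count p (T.erase p) = Multiset.count p (S.erase r2) := by
        have := congrArg (Multiset.count p) hmulteq2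
        rw [Multiset.count_add, Multiset.count_add, hcSA, hcSD2] at this
        simpa using this
      have hCS : 1 ≤ Multiset.count p S := Multiset.one_le_count_iff_mem.2 hpS
      have hCT : 1 ≤ Multiset.count p T := Multiset.one_le_count_iff_mem.2 hpT
      rw [Multiset.count_erase_self] at hcount4
      by_cases hr2p : r2 = p
      · rw [hr2p, Multiset.count_erase_self] at hcount4
        omega
      · rw [Multiset.count_erase_of_ne (show p ≠ r2 from fun h => hr2p h.symm)] at hcount4
        omega

theorem muniq : ∀ n (S T : Multiset M), (∀ p ∈ S, MPrime p) → (∀ q ∈ T, MPrime q) →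
    S.prod = T.prod → msize S.prod = n → S = T := by
  intro n
  induction n using Nat.strong_induction_on with
  | _ n ih =>
    intro S T hS hT hST hn
    by_cases hS0 : S = 0
    · subst hS0
      by_contra hne
      obtain ⟨q, hq⟩ := Multiset.exists_mem_of_ne_zero (fun h => hne h.symm)
      exact prod_ne_one_of_mem_prime hq (hT q hq) (by rw [← hST]; simp)
    by_cases hT0 : T = 0
    · subst hT0
      obtain ⟨q, hq⟩ := Multiset.exists_mem_of_ne_zero hS0
      exact absurd (by rw [hST]; simp) (prod_ne_one_of_mem_prime hq (hS q hq))
    · obtain ⟨p, hpST, hmax⟩ := exists_max_msize (S := S + T)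
        (by simp [hS0])
      rcases Multiset.mem_add.1 hpST with hpS | hpT
      · exact muniq_aux n ih S T hS hT hST hn p hpS hmax
      · refine (muniq_aux n ih T S hT hS hST.symm (by rw [← hST]; exact hn) p hpT ?_).symm
        intro q hq
        exact hmax q (by rw [add_comm]; exact hq)

-- ===== back to Proc =====

lemma mk_prodList (l : List Proc) :
    (⟦prodList l⟧ : M) = ((l.map (fun P => (⟦P⟧ : M)) : Multiset M)).prod := by
  induction l with
  | nil => simp [prodList]; rfl
  | cons a l ih =>
    show (⟦Proc.par a (prodList l)⟧ : M) = _
    rw [← mk_mul, ih]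
    simp

lemma exists_decomp_proc (P : Proc) :
    ∃ l : List Proc, (∀ p ∈ l, IsPrime p) ∧ Bisim P (prodList l) := by
  obtain ⟨S, hS, hSp⟩ := mexists_decomp (⟦P⟧ : M)
  refine ⟨S.toList.map Quotient.out, ?_, ?_⟩
  · intro p hp
    rw [List.mem_map] at hp
    obtain ⟨x, hx, rfl⟩ := hp
    have hxS : x ∈ S := by rwa [← Multiset.mem_toList]
    have := hS x hxS
    rw [isPrime_iff_mprime]
    show MPrime (Quotient.mk _ (Quotient.out x))
    rwa [Quotient.out_eq]
  · have : (⟦prodList (S.toList.map Quotient.out)⟧ : M) = ⟦P⟧ := by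
      rw [mk_prodList, List.map_map]
      have hid : (fun P => (⟦P⟧ : M)) ∘ Quotient.out = id := by
        funext x
        show Quotient.mk _ (Quotient.out x) = x
        exact Quotient.out_eq x
      rw [hid, List.map_id, Multiset.coe_toList, hSp]
    exact (mk_eq_mk.1 this).symm

def consEquiv {n m : ℕ} (e : Fin n ≃ Fin m) : Fin (n+1) ≃ Fin (m+1) where
  toFun := Fin.cases 0 (fun i => (e i).succ)
  invFun := Fin.cases 0 (fun j => (e.symm j).succ)
  left_inv i := by
    induction i using Fin.cases with
    | zero => simp
    | succ i => simp
  right_inv j := by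
    induction j using Fin.cases with
    | zero => simp
    | succ j => simp

@[simp] lemma consEquiv_zero {n m : ℕ} (e : Fin n ≃ Fin m) : consEquiv e 0 = 0 := by
  simp [consEquiv]

@[simp] lemma consEquiv_succ {n m : ℕ} (e : Fin n ≃ Fin m) (i : Fin n) :
    consEquiv e i.succ = (e i).succ := by
  simp [consEquiv]

lemma perm_get_equiv {α : Type*} {l₁ l₂ : List α} (h : l₁.Perm l₂) :
    ∃ e : Fin l₁.length ≃ Fin l₂.length, ∀ i, l₁.get i = l₂.get (e i) := by
  induction h with
  | nil => exact ⟨Equiv.refl _, fun i => i.elim0⟩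
  | @cons x t₁ t₂ h ih =>
    obtain ⟨e, he⟩ := ih
    refine ⟨consEquiv e, fun i => ?_⟩
    induction i using Fin.cases with
    | zero => simp
    | succ i => simpa using he i
  | @swap x y l =>
    refine ⟨(Equiv.swap 0 1 : Fin (l.length + 2) ≃ Fin (l.length + 2)), fun i => ?_⟩
    induction i using Fin.cases with
    | zero => simp [Equiv.swap_apply_left]
    | succ j =>
      induction j using Fin.cases with
      | zero =>
        have h1 : (Fin.succ 0 : Fin (l.length + 2)) = 1 := rfl
        simp [h1, Equiv.swap_apply_right]
      | succ k =>
        have h2 := Equiv.swap_apply_of_ne_of_ne (a := (0 : Fin (l.length+2))) (b := 1)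
          (x := k.succ.succ) (Fin.succ_ne_zero _)
          (fun hk => Fin.succ_ne_zero _ (Fin.succ_injective _ hk))
        simp [h2]
  | trans h1 h2 ih1 ih2 =>
    obtain ⟨e1, he1⟩ := ih1
    obtain ⟨e2, he2⟩ := ih2
    exact ⟨e1.trans e2, fun i => (he1 i).trans (he2 (e1 i))⟩

theorem unique_decomp_proc (l₁ l₂ : List Proc) (h₁ : ∀ p ∈ l₁, IsPrime p)
    (h₂ : ∀ q ∈ l₂, IsPrime q) (h : Bisim (prodList l₁) (prodList l₂)) :
    ∃ e : Fin l₁.length ≃ Fin l₂.length,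
      ∀ i : Fin l₁.length, Bisim (l₁.get i) (l₂.get (e i)) := by
  set f : Proc → M := fun P => (⟦P⟧ : M) with hf
  have hprime : ∀ S : Multiset M, (S = (l₁.map f : Multiset M) ∨ S = (l₂.map f : Multiset M)) →
      ∀ p ∈ S, MPrime p := by
    rintro S (rfl | rfl) p hp <;>
    · rw [Multiset.mem_coe, List.mem_map] at hp
      obtain ⟨x, hx, rfl⟩ := hp
      first
      | exact isPrime_iff_mprime.1 (h₁ x hx)
      | exact isPrime_iff_mprime.1 (h₂ x hx)
  have hprod : ((l₁.map f : Multiset M)).prod = ((l₂.map f : Multiset M)).prod := by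
    rw [← mk_prodList, ← mk_prodList]
    exact mk_eq_mk.2 h
  have hmeq := muniq _ _ _ (hprime _ (Or.inl rfl)) (hprime _ (Or.inr rfl)) hprod rfl
  have hperm : (l₁.map f).Perm (l₂.map f) := Multiset.coe_eq_coe.1 hmeq
  obtain ⟨e, he⟩ := perm_get_equiv hperm
  refine ⟨((finCongr (List.length_map f : (l₁.map f).length = l₁.length)).symm.trans e).trans
    (finCongr (List.length_map f : (l₂.map f).length = l₂.length)), ?_⟩
  intro i
  have := he ((finCongr (List.length_map f : (l₁.map f).length = l₁.length)).symm i)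
  simp only [List.get_eq_getElem, List.getElem_map] at this
  exact mk_eq_mk.1 this


/-- every process admits a prime decomposition, unique up to
    bisimilarity and permutation of the components. -/
theorem unique_prime_decomposition :
    (∀ P : Proc, ∃ l : List Proc, (∀ p ∈ l, IsPrime p) ∧ Bisim P (prodList l)) ∧
    (∀ l₁ l₂ : List Proc, (∀ p ∈ l₁, IsPrime p) → (∀ q ∈ l₂, IsPrime q) →
      Bisim (prodList l₁) (prodList l₂) →
      ∃ e : Fin l₁.length ≃ Fin l₂.length,
        ∀ i : Fin l₁.length, Bisim (l₁.get i) (l₂.get (e i))) :=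
  ⟨exists_decomp_proc, unique_decomp_proc⟩
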